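/- arXiv:0809.2127 — 2 statements merged into one kernel-verified Lean document; each statement's English description precedes it below -/
import Mathlib

section
/- In the group N of 4x4 real lower unitriangular matrices, with n(z,y_1,y_2,x_1,x_2,x_3) \in \mathfrak{n} as above, the following multiplication formula holds: \exp(u X_1 + v X_3) \cdot \exp(n(z,y_1,y_2,x_1,x_2,x_3)) = \exp(n(z', y_1', y_2', 0, x_2, 0)) \cdot \exp((u+x_1) X_1 + (v+x_3) X_3), where y_1' = y_1 - u x_2 - x_1 x_2/2, y_2' = y_2 + v x_2 + x_2 x_3/2, and z' = z + v y_1 - u y_2 + (1/2) x_3 y_1 - (1/2) x_1 y_2 - u v x_2 - (1/2) v x_1 x_2 - (1/2) u x_2 x_3 - (1/3) x_1 x_2 x_3. -/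
open Matrix

/-- Elementary 4×4 real matrix. -/
def E (i j : Fin 4) : Matrix (Fin 4) (Fin 4) ℝ := Matrix.single i j 1

/-- `n(z,y₁,y₂,x₁,x₂,x₃) = zZ + y₁Y₁ + y₂Y₂ + x₁X₁ + x₂X₂ + x₃X₃` with
`X₁ = E₂₁, X₂ = E₃₂, X₃ = E₄₃, Y₁ = E₃₁, Y₂ = E₄₂, Z = E₄₁`. -/
def nmat (z y₁ y₂ x₁ x₂ x₃ : ℝ) : Matrix (Fin 4) (Fin 4) ℝ :=
  x₁ • E 1 0 + x₂ • E 2 1 + x₃ • E 3 2 + y₁ • E 2 0 + y₂ • E 3 1 + z • E 3 0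

lemma exp_nilp4 (A : Matrix (Fin 4) (Fin 4) ℝ) (h : A ^ 4 = 0) :
    NormedSpace.exp A = 1 + A + (2⁻¹ : ℝ) • A ^ 2 + (6⁻¹ : ℝ) • A ^ 3 := by
  rw [NormedSpace.exp_eq_tsum ℝ]
  have hzero : ∀ n ∉ Finset.range 4, ((n.factorial : ℝ))⁻¹ • A ^ n = 0 := by
    intro n hn
    simp only [Finset.mem_range, not_lt] at hn
    have : A ^ n = 0 := by
      rw [← Nat.sub_add_cancel hn, pow_add, h, mul_zero]
    simp [this]
  rw [show (fun x : Matrix (Fin 4) (Fin 4) ℝ => ∑' n : ℕ, ((n.factorial : ℝ))⁻¹ • x ^ n) A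
      = ∑' n : ℕ, ((n.factorial : ℝ))⁻¹ • A ^ n from rfl, tsum_eq_sum hzero]
  simp [Finset.sum_range_succ, Nat.factorial]

lemma nmat_pow4 (z y₁ y₂ x₁ x₂ x₃ : ℝ) : (nmat z y₁ y₂ x₁ x₂ x₃) ^ 4 = 0 := by
  ext i j
  fin_cases i <;> fin_cases j <;>
    simp [pow_succ, Matrix.mul_apply, Fin.sum_univ_four, nmat, E, Matrix.single]

lemma exp_nmat (z y₁ y₂ x₁ x₂ x₃ : ℝ) :
    NormedSpace.exp (nmat z y₁ y₂ x₁ x₂ x₃) =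
      !![1, 0, 0, 0;
         x₁, 1, 0, 0;
         y₁ + x₁ * x₂ / 2, x₂, 1, 0;
         z + (x₁ * y₂ + x₃ * y₁) / 2 + x₁ * x₂ * x₃ / 6, y₂ + x₂ * x₃ / 2, x₃, 1] := by
  rw [exp_nilp4 _ (nmat_pow4 ..)]
  ext i j
  fin_cases i <;> fin_cases j <;>
    simp [pow_succ, Matrix.mul_apply, Fin.sum_univ_four, nmat, E, Matrix.single,
      Matrix.one_apply] <;> ring

lemma uv_eq (u v : ℝ) : u • E 1 0 + v • E 3 2 = nmat 0 0 0 u 0 v := by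
  ext i j; fin_cases i <;> fin_cases j <;> simp [nmat, E, Matrix.single]

/-- Multiplication formula in the lower unitriangular group `N`:
`exp(uX₁ + vX₃)·exp(n(z,y₁,y₂,x₁,x₂,x₃)) = exp(n(z',y₁',y₂',0,x₂,0))·exp((u+x₁)X₁ + (v+x₃)X₃)`. -/
theorem mult_formula_case_I (u v z y₁ y₂ x₁ x₂ x₃ : ℝ) :
    NormedSpace.exp (u • E 1 0 + v • E 3 2) *
        NormedSpace.exp (nmat z y₁ y₂ x₁ x₂ x₃)
      = NormedSpace.exp (nmat
            (z + v * y₁ - u * y₂ + (1/2) * x₃ * y₁ - (1/2) * x₁ * y₂ - u * v * x₂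
              - (1/2) * v * x₁ * x₂ - (1/2) * u * x₂ * x₃ - (1/3) * x₁ * x₂ * x₃)
            (y₁ - u * x₂ - x₁ * x₂ / 2)
            (y₂ + v * x₂ + x₂ * x₃ / 2)
            0 x₂ 0) *
        NormedSpace.exp ((u + x₁) • E 1 0 + (v + x₃) • E 3 2) := by
  rw [uv_eq, uv_eq, exp_nmat, exp_nmat, exp_nmat, exp_nmat]
  ext i j
  fin_cases i <;> fin_cases j <;>
    simp [Matrix.mul_apply, Fin.sum_univ_four, Matrix.vecHead, Matrix.vecTail] <;> ring
end

section
/- In the group N of 4x4 real lower unitriangular matrices, \exp(u X_2) \cdot \exp(n(z,y_1,y_2,x_1,x_2,x_3)) = \exp(n(z', y_1', y_2', x_1, 0, x_3)) \cdot \exp((u + x_2) X_2), where z' = z + (1/6) x_1 x_2 x_3, y_1' = y_1 + x_1 u + (1/2) x_1 x_2, and y_2' = y_2 - x_3 u - (1/2) x_2 x_3. -/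
open Matrix

lemma exp_nilpotent4' (M : Matrix (Fin 4) (Fin 4) ℝ) (h : M ^ 4 = 0) :
    NormedSpace.exp M = 1 + M + ((1:ℝ)/2) • M ^ 2 + ((1:ℝ)/6) • M ^ 3 := by
  have hpow : ∀ n, M ^ (n + 4) = 0 := by
    intro n; rw [pow_add, h, mul_zero]
  rw [NormedSpace.exp_eq_tsum (𝕂 := ℝ)]
  have : (∑' n : ℕ, ((n.factorial : ℝ))⁻¹ • M ^ n)
      = ∑ n ∈ Finset.range 4, ((n.factorial : ℝ))⁻¹ • M ^ n := by
    apply tsum_eq_sum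
    intro n hn
    have : 4 ≤ n := by by_contra hc; exact hn (Finset.mem_range.mpr (lt_of_not_ge hc))
    obtain ⟨k, rfl⟩ := Nat.exists_eq_add_of_le this
    rw [add_comm, hpow, smul_zero]
  rw [show (fun x : Matrix (Fin 4) (Fin 4) ℝ => ∑' n : ℕ, ((n.factorial : ℝ))⁻¹ • x ^ n) M
      = ∑' n : ℕ, ((n.factorial : ℝ))⁻¹ • M ^ n from rfl, this]
  simp only [Finset.sum_range_succ, Finset.sum_range_zero, Nat.factorial]
  norm_num

lemma tri_sq' (a b c d e f : ℝ) :
    (!![0,0,0,0; a,0,0,0; b,c,0,0; d,e,f,0] : Matrix (Fin 4) (Fin 4) ℝ) ^ 2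
      = !![0,0,0,0; 0,0,0,0; c*a,0,0,0; e*a + f*b, f*c, 0, 0] := by
  rw [sq]
  ext i j
  fin_cases i <;> fin_cases j <;>
    simp [Matrix.mul_apply, Fin.sum_univ_four, Matrix.vecHead, Matrix.vecTail]

lemma tri_cube' (a b c d e f : ℝ) :
    (!![0,0,0,0; a,0,0,0; b,c,0,0; d,e,f,0] : Matrix (Fin 4) (Fin 4) ℝ) ^ 3
      = !![0,0,0,0; 0,0,0,0; 0,0,0,0; f*c*a, 0, 0, 0] := by
  rw [pow_succ, tri_sq']
  ext i j
  fin_cases i <;> fin_cases j <;>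
    simp [Matrix.mul_apply, Fin.sum_univ_four, Matrix.vecHead, Matrix.vecTail] <;> ring

lemma tri_pow4' (a b c d e f : ℝ) :
    (!![0,0,0,0; a,0,0,0; b,c,0,0; d,e,f,0] : Matrix (Fin 4) (Fin 4) ℝ) ^ 4 = 0 := by
  rw [pow_succ, tri_cube']
  ext i j
  fin_cases i <;> fin_cases j <;>
    simp [Matrix.mul_apply, Fin.sum_univ_four, Matrix.vecHead, Matrix.vecTail]

lemma exp_tri' (a b c d e f : ℝ) :
    NormedSpace.exp (!![0,0,0,0; a,0,0,0; b,c,0,0; d,e,f,0] : Matrix (Fin 4) (Fin 4) ℝ)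
      = !![1,0,0,0; a,1,0,0; b + c*a/2, c, 1, 0;
           d + (e*a + f*b)/2 + f*c*a/6, e + f*c/2, f, 1] := by
  rw [exp_nilpotent4' _ (tri_pow4' a b c d e f), tri_sq', tri_cube']
  ext i j
  fin_cases i <;> fin_cases j <;>
    simp [Matrix.one_apply, Matrix.vecHead, Matrix.vecTail] <;> ring

lemma nmat_eq' (z y₁ y₂ x₁ x₂ x₃ : ℝ) :
    nmat z y₁ y₂ x₁ x₂ x₃ = !![0,0,0,0; x₁,0,0,0; y₁,x₂,0,0; z,y₂,x₃,0] := by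
  ext i j
  fin_cases i <;> fin_cases j <;>
    simp [nmat, E, Matrix.single, Matrix.of_apply, Matrix.vecHead, Matrix.vecTail]

/-- Multiplication formula in the lower unitriangular group `N`:
`exp(uX₂)·exp(n(z,y₁,y₂,x₁,x₂,x₃)) = exp(n(z',y₁',y₂',x₁,0,x₃))·exp((u+x₂)X₂)` with
`z' = z + x₁x₂x₃/6`, `y₁' = y₁ + x₁u + x₁x₂/2`, `y₂' = y₂ - x₃u - x₂x₃/2`. -/
theorem mult_formula_case_II (u z y₁ y₂ x₁ x₂ x₃ : ℝ) :
    NormedSpace.exp (u • E 2 1) * NormedSpace.exp (nmat z y₁ y₂ x₁ x₂ x₃)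
      = NormedSpace.exp (nmat
            (z + (1/6) * x₁ * x₂ * x₃)
            (y₁ + x₁ * u + (1/2) * x₁ * x₂)
            (y₂ - x₃ * u - (1/2) * x₂ * x₃)
            x₁ 0 x₃) *
        NormedSpace.exp ((u + x₂) • E 2 1) := by
  have h1 : u • E 2 1 = nmat 0 0 0 0 u 0 := by simp [nmat, E]
  have h2 : (u + x₂) • E 2 1 = nmat 0 0 0 0 (u + x₂) 0 := by simp [nmat, E]
  rw [h1, h2]
  simp only [nmat_eq', exp_tri']
  ext i j
  fin_cases i <;> fin_cases j <;>
    simp [Matrix.mul_apply, Fin.sum_univ_four, Matrix.vecHead, Matrix.vecTail] <;> ring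
end
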